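/- Let W be a finite reflection group on Euclidean space V and let w ∈ W with w ≠ id. Then there exists a root a ∈ Im(id − w) such that s_a w fixes pointwise a subspace strictly larger than Fix(w). Specifically, if a = x − w(x) is a root, then 2(a,x) = (a,a), hence s_a(x) = w(x), and s_a w fixes both Fix(w) and x. -/

import Mathlib

open scoped RealInnerProductSpace

/-- The reflection in a root `a`: `s_a(x) = x - 2(⟪x,a⟫/⟪a,a⟫) • a`. -/
noncomputable def sR {V : Type} [NormedAddCommGroup V] [InnerProductSpace ℝ V]
    (a x : V) : V :=
  x - (2 * ⟪x, a⟫ / ⟪a, a⟫) • a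

/-- A linear automorphism is a reflection if it is given by `s_a` for some nonzero root `a`. -/
def IsReflAuto {V : Type} [NormedAddCommGroup V] [InnerProductSpace ℝ V]
    (g : V ≃ₗ[ℝ] V) : Prop :=
  ∃ a : V, a ≠ 0 ∧ ∀ x, g x = sR a x

namespace St15

open scoped Classical

variable {V : Type} [NormedAddCommGroup V] [InnerProductSpace ℝ V]

lemma sR_zero (x : V) : sR (0 : V) x = x := by
  simp [sR]

lemma sR_sR (a x : V) : sR a (sR a x) = x := by
  rcases eq_or_ne a 0 with h | h
  · simp [h, sR_zero]
  · have ht : ⟪a, a⟫ ≠ 0 := by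
      simpa [real_inner_self_eq_norm_sq] using h
    simp only [sR, inner_sub_left, real_inner_smul_left]
    rw [sub_sub, ← add_smul]
    have : 2 * ⟪x, a⟫ / ⟪a, a⟫ + 2 * (⟪x, a⟫ - 2 * ⟪x, a⟫ / ⟪a, a⟫ * ⟪a, a⟫) / ⟪a, a⟫ = 0 := by
      field_simp
      ring
    rw [this, zero_smul, sub_zero]

lemma sR_smul_root {a : V} {c : ℝ} (hc : c ≠ 0) (x : V) : sR (c • a) x = sR a x := by
  rcases eq_or_ne a 0 with h | h
  · simp [h, sR_zero]
  · have ht : ⟪a, a⟫ ≠ 0 := by simpa [real_inner_self_eq_norm_sq] using h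
    simp only [sR, real_inner_smul_right, real_inner_smul_left, smul_smul]
    have h1 : c * (c * ⟪a, a⟫) ≠ 0 := mul_ne_zero hc (mul_ne_zero hc ht)
    have h2 : 2 * (c * ⟪x, a⟫) / (c * (c * ⟪a, a⟫)) * c = 2 * ⟪x, a⟫ / ⟪a, a⟫ := by
      rw [div_mul_eq_mul_div, div_eq_div_iff h1 ht]
      ring
    rw [h2]

/-- The reflection as a linear equivalence. -/
noncomputable def sLE (a : V) : V ≃ₗ[ℝ] V :=
  LinearEquiv.ofInvolutive
    { toFun := fun x => sR a x
      map_add' := by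
        intro x y
        simp only [sR, inner_add_left]
        rw [mul_add, add_div, add_smul]
        abel
      map_smul' := by
        intro c x
        simp only [sR, real_inner_smul_left, RingHom.id_apply, smul_sub, smul_smul]
        congr 1
        ring_nf }
    (fun x => sR_sR a x)

@[simp] lemma sLE_apply (a x : V) : sLE a x = sR a x := rfl

lemma sLE_smul_root {a : V} {c : ℝ} (hc : c ≠ 0) : sLE (c • a) = sLE a := by
  apply LinearEquiv.toLinearMap_injective
  apply LinearMap.ext
  intro x
  simpa using sR_smul_root hc x

lemma sLE_neg_root (a : V) : sLE (-a) = sLE a := by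
  have := sLE_smul_root (a := a) (c := (-1 : ℝ)) (by norm_num)
  simpa using this

lemma sLE_mul_self (a : V) : sLE a * sLE a = 1 := by
  apply LinearEquiv.toLinearMap_injective
  apply LinearMap.ext
  intro x
  have : (sLE a * sLE a) x = sR a (sR a x) := rfl
  simp [this, sR_sR]

lemma sLE_inv (a : V) : (sLE a)⁻¹ = sLE a :=
  inv_eq_of_mul_eq_one_left (sLE_mul_self a)

lemma sR_unit {a : V} (ha : ⟪a, a⟫ = 1) (x : V) : sR a x = x - (2 * ⟪x, a⟫) • a := by
  simp only [sR, ha, div_one]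

lemma sR_apply_self {a : V} (ha : ⟪a, a⟫ = 1) : sR a a = -a := by
  rw [sR_unit ha, ha]
  module

lemma sR_fixed {a x : V} (h : ⟪x, a⟫ = 0) : sR a x = x := by
  simp [sR, h]


section Group

variable (G : Subgroup (V ≃ₗ[ℝ] V))

/-- Orthogonality hypothesis abbreviation. -/
def Orth (G : Subgroup (V ≃ₗ[ℝ] V)) : Prop := ∀ g ∈ G, ∀ x y : V, ⟪g x, g y⟫ = ⟪x, y⟫

variable {G}

lemma inv_inner (horth : Orth G) {g : V ≃ₗ[ℝ] V} (hg : g ∈ G) (x y : V) :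
    ⟪g⁻¹ x, y⟫ = ⟪x, g y⟫ := by
  have := horth g hg (g⁻¹ x) y
  rw [show g (g⁻¹ x) = x from g.apply_symm_apply x] at this
  exact this.symm

lemma conj_sLE (horth : Orth G) {g : V ≃ₗ[ℝ] V} (hg : g ∈ G) (a : V) :
    sLE (g a) = g * sLE a * g⁻¹ := by
  apply LinearEquiv.toLinearMap_injective
  apply LinearMap.ext
  intro x
  have hmul : (g * sLE a * g⁻¹) x = g (sR a (g⁻¹ x)) := rfl
  have hip : ⟪g⁻¹ x, a⟫ = ⟪x, g a⟫ := inv_inner horth hg x a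
  have hnorm : ⟪g a, g a⟫ = ⟪a, a⟫ := horth g hg a a
  show sR (g a) x = (g * sLE a * g⁻¹) x
  rw [hmul]
  simp only [sR, map_sub, map_smul, hip, hnorm]
  rw [show g (g⁻¹ x) = x from g.apply_symm_apply x]

/-- The set of unit roots of reflections in `G`. -/
def RootSet (G : Subgroup (V ≃ₗ[ℝ] V)) : Set V := {a | ⟪a, a⟫ = 1 ∧ sLE a ∈ G}

lemma rootset_neg {a : V} (ha : a ∈ RootSet G) : -a ∈ RootSet G := by
  refine ⟨by simpa using ha.1, ?_⟩
  rw [sLE_neg_root]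
  exact ha.2

lemma rootset_ne_zero {a : V} (ha : a ∈ RootSet G) : a ≠ 0 := by
  intro h
  rw [h] at ha
  simpa using ha.1

lemma rootset_closed (horth : Orth G) {a : V} (ha : a ∈ RootSet G)
    {g : V ≃ₗ[ℝ] V} (hg : g ∈ G) : g a ∈ RootSet G := by
  refine ⟨by rw [horth g hg a a]; exact ha.1, ?_⟩
  rw [conj_sLE horth hg]
  exact mul_mem (mul_mem hg ha.2) (inv_mem hg)

lemma rootset_finite (hfin : Finite G) : (RootSet G).Finite := by
  have hGfin : (G : Set (V ≃ₗ[ℝ] V)).Finite := Set.finite_coe_iff.mpr hfin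
  have hsub : RootSet G ⊆ ⋃ g ∈ (G : Set (V ≃ₗ[ℝ] V)), {a : V | ⟪a, a⟫ = 1 ∧ sLE a = g} := by
    intro a ha
    simp only [Set.mem_iUnion]
    exact ⟨sLE a, ha.2, ha.1, rfl⟩
  refine Set.Finite.subset (Set.Finite.biUnion hGfin ?_) hsub
  intro g _
  rcases Set.eq_empty_or_nonempty {a : V | ⟪a, a⟫ = 1 ∧ sLE a = g} with h | ⟨c, hc⟩
  · rw [h]; exact Set.finite_empty
  · apply Set.Finite.subset ((Set.finite_singleton (-c)).insert c)
    intro b hb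
    have hbc : sLE c b = sLE b b := by rw [hb.2, hc.2]
    have h1 : sLE b b = -b := by rw [sLE_apply, sR_apply_self hb.1]
    have h2 : sLE c b = b - (2 * ⟪b, c⟫) • c := by rw [sLE_apply, sR_unit hc.1]
    rw [h1, h2] at hbc
    have key : b = ⟪b, c⟫ • c := by
      linear_combination (norm := module) ((1:ℝ)/2) • hbc
    have hsq : ⟪b, c⟫ * ⟪b, c⟫ = 1 := by
      have : ⟪b, b⟫ = ⟪b, c⟫ * (⟪b, c⟫ * ⟪c, c⟫) := by
        nth_rewrite 1 [key]
        nth_rewrite 2 [key]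
        rw [real_inner_smul_left, real_inner_smul_right]
      rw [hb.1, hc.1, mul_one] at this
      linarith [this]
    rcases mul_self_eq_one_iff.mp hsq with h | h
    · left
      rw [key, h, one_smul]
    · right
      rw [key, h]
      simp

end Group


section Cone

open Finset

/-- The nonnegative cone spanned by a finite set. -/
def Cone (S : Finset V) : Set V :=
  {x | ∃ c : V → ℝ, (∀ b, 0 ≤ c b) ∧ x = ∑ b ∈ S, c b • b}

lemma cone_self {S : Finset V} {a : V} (ha : a ∈ S) : a ∈ Cone S := by
  refine ⟨fun b => if b = a then 1 else 0, fun b => by positivity, ?_⟩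
  rw [show ∑ b ∈ S, (if b = a then (1:ℝ) else 0) • b = ∑ b ∈ S, (if b = a then b else 0) from
    Finset.sum_congr rfl (fun b _ => by split <;> simp)]
  rw [Finset.sum_ite_eq' S a (fun b => b), if_pos ha]

lemma sum_ite_single {S : Finset V} {a : V} (ha : a ∈ S) (c : ℝ) :
    ∑ ε ∈ S, (if ε = a then c else 0) • ε = c • a := by
  rw [show ∑ ε ∈ S, (if ε = a then c else 0) • ε = ∑ ε ∈ S, (if ε = a then c • ε else 0) from
    Finset.sum_congr rfl (fun b _ => by split <;> simp)]
  rw [Finset.sum_ite_eq' S a (fun ε => c • ε), if_pos ha]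

lemma sum_add_smul (S : Finset V) (m n : V → ℝ) :
    ∑ ε ∈ S, (m ε + n ε) • ε = ∑ ε ∈ S, m ε • ε + ∑ ε ∈ S, n ε • ε := by
  rw [← Finset.sum_add_distrib]
  exact Finset.sum_congr rfl (fun ε _ => add_smul _ _ _)

lemma cone_scale {S : Finset V} {x : V} {t : ℝ} (ht : 0 < t) (m : V → ℝ)
    (hm : ∀ b, 0 ≤ m b) (h : t • x = ∑ b ∈ S, m b • b) : x ∈ Cone S := by
  refine ⟨fun b => t⁻¹ * m b, fun b => mul_nonneg (by positivity) (hm b), ?_⟩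
  have := congrArg (fun z => t⁻¹ • z) h
  simp only [smul_smul, inv_mul_cancel₀ ht.ne', one_smul, Finset.smul_sum] at this
  simpa [smul_smul] using this

lemma cone_subst {S : Finset V} {b : V} (hb : b ∈ S) (h : b ∈ Cone (S.erase b)) :
    Cone S ⊆ Cone (S.erase b) := by
  rintro x ⟨c, hc, rfl⟩
  obtain ⟨e, he, hbe⟩ := h
  refine ⟨fun a => c b * e a + c a, fun a => add_nonneg (mul_nonneg (hc b) (he a)) (hc a), ?_⟩
  rw [← Finset.add_sum_erase S (fun a => c a • a) hb]
  have : ∑ a ∈ S.erase b, (c b * e a + c a) • a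
      = c b • (∑ a ∈ S.erase b, e a • a) + ∑ a ∈ S.erase b, c a • a := by
    rw [Finset.smul_sum, ← Finset.sum_add_distrib]
    exact Finset.sum_congr rfl (fun a _ => by rw [add_smul, smul_smul])
  rw [this, ← hbe]

lemma cone_inner_nonneg {S : Finset V} (q : V) (hq : ∀ b ∈ S, 0 ≤ ⟪q, b⟫)
    {x : V} (hx : x ∈ Cone S) : 0 ≤ ⟪q, x⟫ := by
  obtain ⟨c, hc, rfl⟩ := hx
  rw [inner_sum]
  refine Finset.sum_nonneg (fun b hb => ?_)
  rw [real_inner_smul_right]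
  exact mul_nonneg (hc b) (hq b hb)

end Cone

section Sys

open Finset

variable (R : Finset V) (v : V)

/-- The positive system. -/
noncomputable def Pi : Finset V := R.filter (fun a => 0 < ⟪v, a⟫)

variable {R v}

lemma Pi_subset : Pi R v ⊆ R := Finset.filter_subset _ _

lemma mem_Pi_pos {a : V} (h : a ∈ Pi R v) : 0 < ⟪v, a⟫ := (Finset.mem_filter.mp h).2

lemma mem_Pi {a : V} (ha : a ∈ R) (h : 0 < ⟪v, a⟫) : a ∈ Pi R v :=
  Finset.mem_filter.mpr ⟨ha, h⟩

variable {G : Subgroup (V ≃ₗ[ℝ] V)}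

/-- Hypotheses bundle for the root system development. -/
structure Setting (G : Subgroup (V ≃ₗ[ℝ] V)) (R : Finset V) (v : V) : Prop where
  orth : Orth G
  unit : ∀ a ∈ R, ⟪a, a⟫ = (1:ℝ)
  memG : ∀ a ∈ R, sLE a ∈ G
  closed : ∀ a ∈ R, ∀ g ∈ G, g a ∈ R
  negmem : ∀ a ∈ R, -a ∈ R
  generic : ∀ a ∈ R, ⟪v, a⟫ ≠ 0
  full : ∀ a : V, ⟪a, a⟫ = (1:ℝ) → sLE a ∈ G → a ∈ R

lemma Setting.trichotomy (hs : Setting G R v) {a : V} (ha : a ∈ R) :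
    a ∈ Pi R v ∨ -a ∈ Pi R v := by
  rcases lt_or_gt_of_ne (hs.generic a ha) with h | h
  · right
    refine mem_Pi (hs.negmem a ha) ?_
    rw [inner_neg_right]
    linarith
  · left
    exact mem_Pi ha h

lemma Setting.reflected_mem (hs : Setting G R v) {a b : V} (ha : a ∈ R) (hb : b ∈ R) :
    sLE a b ∈ R :=
  hs.closed b hb _ (hs.memG a ha)

/-- The simple system property. -/
structure DeltaProp (R : Finset V) (v : V) (Δ : Finset V) : Prop where
  sub : Δ ⊆ Pi R v
  cone : ∀ β ∈ Pi R v, (β : V) ∈ Cone Δ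
  min : ∀ D ⊆ Pi R v, (∀ β ∈ Pi R v, (β : V) ∈ Cone D) → Δ.card ≤ D.card

lemma exists_delta (R : Finset V) (v : V) : ∃ Δ : Finset V, DeltaProp R v Δ := by
  classical
  set cands := (Pi R v).powerset.filter (fun D => ∀ β ∈ Pi R v, (β : V) ∈ Cone D) with hcands
  have hne : cands.Nonempty := by
    refine ⟨Pi R v, Finset.mem_filter.mpr ⟨Finset.mem_powerset_self _, ?_⟩⟩
    exact fun β hβ => cone_self hβ
  obtain ⟨Δ, hΔ, hmin⟩ := Finset.exists_min_image cands Finset.card hne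
  rw [hcands, Finset.mem_filter, Finset.mem_powerset] at hΔ
  refine ⟨Δ, hΔ.1, hΔ.2, ?_⟩
  intro D hD hDcone
  exact hmin D (Finset.mem_filter.mpr ⟨Finset.mem_powerset.mpr hD, hDcone⟩)

end Sys


section Core

open Finset

variable {G : Subgroup (V ≃ₗ[ℝ] V)} {R : Finset V} {v : V} {Δ : Finset V}

lemma delta_sub_R (hΔ : DeltaProp R v Δ) : Δ ⊆ R :=
  fun a ha => Pi_subset (hΔ.sub ha)

lemma delta_pos (hΔ : DeltaProp R v Δ) {δ : V} (hδ : δ ∈ Δ) : 0 < ⟪v, δ⟫ :=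
  mem_Pi_pos (hΔ.sub hδ)

/-- If an element of `Pi` has a cone expression supported only at `α ∈ Δ`, it equals `α`. -/
lemma eq_of_expr_single (hs : Setting G R v) (hΔ : DeltaProp R v Δ)
    {α β : V} (hα : α ∈ Δ) (hβ : β ∈ Pi R v) (m : ℝ) (h : β = m • α) : β = α := by
  have hαR : α ∈ R := delta_sub_R hΔ hα
  have huα : ⟪α, α⟫ = 1 := hs.unit α hαR
  have huβ : ⟪β, β⟫ = 1 := hs.unit β (Pi_subset hβ)
  have hm : m * m = 1 := by
    have : ⟪β, β⟫ = m * (m * ⟪α, α⟫) := by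
      rw [h, real_inner_smul_left, real_inner_smul_right]
    rw [huβ, huα, mul_one] at this
    linarith
  have hvβ : 0 < ⟪v, β⟫ := mem_Pi_pos hβ
  have hvα : 0 < ⟪v, α⟫ := delta_pos hΔ hα
  have hvβ' : ⟪v, β⟫ = m * ⟪v, α⟫ := by rw [h, real_inner_smul_right]
  rcases mul_self_eq_one_iff.mp hm with h1 | h1
  · rw [h, h1, one_smul]
  · exfalso
    rw [h1] at hvβ'
    nlinarith

/-- Distinct simple roots are obtuse. -/
lemma obtuse (hs : Setting G R v) (hΔ : DeltaProp R v Δ)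
    {α β : V} (hα : α ∈ Δ) (hβ : β ∈ Δ) (hne : α ≠ β) : ⟪α, β⟫ ≤ 0 := by
  by_contra hpos
  push_neg at hpos
  have hαR : α ∈ R := delta_sub_R hΔ hα
  have hβR : β ∈ R := delta_sub_R hΔ hβ
  set c : ℝ := 2 * ⟪β, α⟫ with hc
  have hcpos : 0 < c := by
    rw [hc]
    have : ⟪β, α⟫ = ⟪α, β⟫ := real_inner_comm α β
    linarith
  have hσR : sLE α β ∈ R := hs.reflected_mem hαR hβR
  have hσ : sLE α β = β - c • α := by
    rw [sLE_apply, sR_unit (hs.unit α hαR)]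
  have hβerase : β ∈ (Pi R v) := hΔ.sub hβ
  -- the two minimality contradictions
  have hcard : ∀ b ∈ Δ, (b : V) ∈ Cone (Δ.erase b) → False := by
    intro b hb hcone
    have hD : Δ.erase b ⊆ Pi R v := fun x hx => hΔ.sub (Finset.erase_subset _ _ hx)
    have hDcone : ∀ γ ∈ Pi R v, (γ : V) ∈ Cone (Δ.erase b) :=
      fun γ hγ => cone_subst hb hcone (hΔ.cone γ hγ)
    have := hΔ.min (Δ.erase b) hD hDcone
    have hlt : (Δ.erase b).card < Δ.card := Finset.card_erase_lt_of_mem hb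
    omega
  rcases lt_or_gt_of_ne (hs.generic _ hσR) with hvneg | hvpos
  · -- σ negative: τ = c•α - β ∈ Pi
    have hτR : -(sLE α β) ∈ R := hs.negmem _ hσR
    have hτPi : -(sLE α β) ∈ Pi R v := by
      refine mem_Pi hτR ?_
      rw [inner_neg_right]
      linarith
    obtain ⟨m, hm, hmeq⟩ := hΔ.cone _ hτPi
    -- c • α = β + ∑ m ε • ε
    have h1 : c • α = β + ∑ ε ∈ Δ, m ε • ε := by
      rw [← hmeq, hσ]
      module
    have hsplit : ∑ ε ∈ Δ, m ε • ε = m α • α + ∑ ε ∈ Δ.erase α, m ε • ε :=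
      (Finset.add_sum_erase Δ (fun ε => m ε • ε) hα).symm
    rcases le_or_gt c (m α) with hle | hlt
    · -- 0 = β + (m α - c) • α + ∑_erase
      have h2 : (0 : V) = β + (m α - c) • α + ∑ ε ∈ Δ.erase α, m ε • ε := by
        rw [hsplit] at h1
        linear_combination (norm := module) h1
      have h3 := congrArg (fun z : V => ⟪v, z⟫) h2
      simp only [inner_zero_right, inner_add_right, real_inner_smul_right, inner_sum] at h3
      have hsumnn : 0 ≤ ∑ ε ∈ Δ.erase α, m ε * ⟪v, ε⟫ := by
        refine Finset.sum_nonneg (fun ε hε => ?_)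
        have : 0 < ⟪v, ε⟫ := delta_pos hΔ (Finset.erase_subset _ _ hε)
        exact mul_nonneg (hm ε) this.le
      have hvβ : 0 < ⟪v, β⟫ := delta_pos hΔ hβ
      have hvα : 0 < ⟪v, α⟫ := delta_pos hΔ hα
      have : ∑ ε ∈ Δ.erase α, m ε * ⟪v, ε⟫ = ∑ ε ∈ Δ.erase α, m ε • ⟪v, ε⟫ := rfl
      nlinarith [mul_nonneg (sub_nonneg.mpr hle) hvα.le]
    · -- α ∈ Cone (Δ.erase α)
      have hβmem : β ∈ Δ.erase α := Finset.mem_erase.mpr ⟨hne.symm, hβ⟩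
      have h2 : (c - m α) • α = ∑ ε ∈ Δ.erase α, (m ε + if ε = β then 1 else 0) • ε := by
        rw [sum_add_smul, sum_ite_single hβmem (1:ℝ), one_smul]
        rw [hsplit] at h1
        linear_combination (norm := module) h1
      have : α ∈ Cone (Δ.erase α) := by
        refine cone_scale (t := c - m α) (by linarith) _
          (fun b => add_nonneg (hm b) (by positivity)) h2
      exact hcard α hα this
  · -- σ positive: σ ∈ Pi
    have hσPi : sLE α β ∈ Pi R v := mem_Pi hσR hvpos
    obtain ⟨m, hm, hmeq⟩ := hΔ.cone _ hσPi
    -- β = c•α + ∑ m ε • ε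
    have h1 : β = c • α + ∑ ε ∈ Δ, m ε • ε := by
      rw [← hmeq, hσ]
      module
    have hsplit : ∑ ε ∈ Δ, m ε • ε = m β • β + ∑ ε ∈ Δ.erase β, m ε • ε :=
      (Finset.add_sum_erase Δ (fun ε => m ε • ε) hβ).symm
    rcases le_or_gt 1 (m β) with hle | hlt
    · have h2 : (0 : V) = c • α + (m β - 1) • β + ∑ ε ∈ Δ.erase β, m ε • ε := by
        rw [hsplit] at h1
        linear_combination (norm := module) h1
      have h3 := congrArg (fun z : V => ⟪v, z⟫) h2
      simp only [inner_zero_right, inner_add_right, real_inner_smul_right, inner_sum] at h3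
      have hsumnn : 0 ≤ ∑ ε ∈ Δ.erase β, m ε * ⟪v, ε⟫ := by
        refine Finset.sum_nonneg (fun ε hε => ?_)
        have : 0 < ⟪v, ε⟫ := delta_pos hΔ (Finset.erase_subset _ _ hε)
        exact mul_nonneg (hm ε) this.le
      have hvβ : 0 < ⟪v, β⟫ := delta_pos hΔ hβ
      have hvα : 0 < ⟪v, α⟫ := delta_pos hΔ hα
      nlinarith [mul_nonneg (sub_nonneg.mpr hle) hvβ.le]
    · have hαmem : α ∈ Δ.erase β := Finset.mem_erase.mpr ⟨hne, hα⟩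
      have h2 : (1 - m β) • β = ∑ ε ∈ Δ.erase β, (m ε + if ε = α then c else 0) • ε := by
        rw [sum_add_smul, sum_ite_single hαmem c]
        rw [hsplit] at h1
        linear_combination (norm := module) h1
      have : β ∈ Cone (Δ.erase β) := by
        refine cone_scale (t := 1 - m β) (by linarith) _
          (fun b => add_nonneg (hm b) (by positivity)) h2
      exact hcard β hβ this

/-- Simple roots are linearly independent (in the relevant weak form). -/
lemma delta_indep (hs : Setting G R v) (hΔ : DeltaProp R v Δ)
    (d : V → ℝ) (hd : ∑ ε ∈ Δ, d ε • ε = 0) : ∀ ε ∈ Δ, d ε = 0 := by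
  classical
  set P := Δ.filter (fun ε => 0 < d ε) with hP
  set N := Δ.filter (fun ε => d ε < 0) with hN
  set z := ∑ ε ∈ P, d ε • ε with hz
  have hsplit : ∑ ε ∈ Δ, d ε • ε = z + ∑ ε ∈ Δ.filter (fun ε => ¬ 0 < d ε), d ε • ε :=
    (Finset.sum_filter_add_sum_filter_not Δ _ _).symm
  have hrest : ∑ ε ∈ Δ.filter (fun ε => ¬ 0 < d ε), d ε • ε = ∑ ε ∈ N, d ε • ε := by
    rw [show N = (Δ.filter (fun ε => ¬ 0 < d ε)).filter (fun ε => d ε < 0) from by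
      rw [Finset.filter_filter]
      exact Finset.filter_congr (fun ε _ => by constructor <;> intro h <;>
        [exact ⟨by linarith, h⟩; exact h.2])]
    rw [← Finset.sum_filter_add_sum_filter_not (Δ.filter (fun ε => ¬ 0 < d ε))
      (fun ε => d ε < 0) (fun ε => d ε • ε)]
    have : ∑ ε ∈ (Δ.filter (fun ε => ¬ 0 < d ε)).filter (fun ε => ¬ d ε < 0),
        d ε • ε = 0 := by
      refine Finset.sum_eq_zero (fun ε hε => ?_)
      simp only [Finset.mem_filter] at hε
      have : d ε = 0 := le_antisymm (by simpa using hε.1.2) (by simpa using hε.2)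
      rw [this, zero_smul]
    rw [this, add_zero]
  have hzy : z = ∑ ε ∈ N, (- d ε) • ε := by
    have h0 : z + ∑ ε ∈ N, d ε • ε = 0 := by rw [← hrest, ← hsplit, hd]
    have : ∑ ε ∈ N, (- d ε) • ε = - ∑ ε ∈ N, d ε • ε := by
      rw [← Finset.sum_neg_distrib]
      exact Finset.sum_congr rfl (fun ε _ => neg_smul _ _)
    rw [this]
    linear_combination (norm := module) h0
  have hzz : ⟪z, z⟫ ≤ 0 := by
    nth_rewrite 2 [hzy]
    rw [hz, sum_inner]
    refine Finset.sum_nonpos (fun ε hε => ?_)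
    rw [real_inner_smul_left, inner_sum]
    rw [Finset.mem_filter] at hε
    refine mul_nonpos_of_nonneg_of_nonpos hε.2.le ?_
    refine Finset.sum_nonpos (fun ε' hε' => ?_)
    rw [Finset.mem_filter] at hε'
    rw [real_inner_smul_right]
    have hne : ε ≠ ε' := by
      intro h
      rw [h] at hε
      linarith [hε.2, hε'.2]
    have hob : ⟪ε, ε'⟫ ≤ 0 := obtuse hs hΔ hε.1 hε'.1 hne
    nlinarith [hε'.2]
  have hz0 : z = 0 := by
    have := real_inner_self_nonpos.mp hzz
    exact this
  have hPempty : P = ∅ := by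
    by_contra hne
    obtain ⟨ε₀, hε₀⟩ := Finset.nonempty_of_ne_empty hne
    have hvz : ⟪v, z⟫ = 0 := by rw [hz0, inner_zero_right]
    rw [hz, inner_sum] at hvz
    have hpos : 0 < ∑ ε ∈ P, ⟪v, d ε • ε⟫ := by
      refine Finset.sum_pos (fun ε hε => ?_) ⟨ε₀, hε₀⟩
      rw [Finset.mem_filter] at hε
      rw [real_inner_smul_right]
      exact mul_pos hε.2 (delta_pos hΔ hε.1)
    linarith
  have hNempty : N = ∅ := by
    by_contra hne
    obtain ⟨ε₀, hε₀⟩ := Finset.nonempty_of_ne_empty hne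
    have hy0 : ∑ ε ∈ N, (- d ε) • ε = 0 := by rw [← hzy, hz0]
    have hvz : ⟪v, ∑ ε ∈ N, (- d ε) • ε⟫ = 0 := by rw [hy0, inner_zero_right]
    rw [inner_sum] at hvz
    have hpos : 0 < ∑ ε ∈ N, ⟪v, (- d ε) • ε⟫ := by
      refine Finset.sum_pos (fun ε hε => ?_) ⟨ε₀, hε₀⟩
      rw [Finset.mem_filter] at hε
      rw [real_inner_smul_right]
      exact mul_pos (by linarith [hε.2]) (delta_pos hΔ hε.1)
    linarith
  intro ε hε
  by_contra hne
  rcases lt_or_gt_of_ne hne with h | h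
  · have : ε ∈ N := Finset.mem_filter.mpr ⟨hε, h⟩
    rw [hNempty] at this
    exact absurd this (Finset.notMem_empty ε)
  · have : ε ∈ P := Finset.mem_filter.mpr ⟨hε, h⟩
    rw [hPempty] at this
    exact absurd this (Finset.notMem_empty ε)

/-- Key lemma: if a simple reflection sends a positive root to a negative root,
the root is the simple root itself. -/
lemma eq_of_refl_neg (hs : Setting G R v) (hΔ : DeltaProp R v Δ)
    {α β : V} (hα : α ∈ Δ) (hβ : β ∈ Pi R v) (hneg : ⟪v, sLE α β⟫ < 0) : β = α := by
  classical
  have hαR : α ∈ R := delta_sub_R hΔ hα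
  have hβR : β ∈ R := Pi_subset hβ
  set c : ℝ := 2 * ⟪β, α⟫ with hc
  have hσR : sLE α β ∈ R := hs.reflected_mem hαR hβR
  have hσ : sLE α β = β - c • α := by rw [sLE_apply, sR_unit (hs.unit α hαR)]
  have hτPi : -(sLE α β) ∈ Pi R v := by
    refine mem_Pi (hs.negmem _ hσR) ?_
    rw [inner_neg_right]
    linarith
  obtain ⟨mm, hmm, hmmeq⟩ := hΔ.cone β hβ
  obtain ⟨n, hn, hneq⟩ := hΔ.cone _ hτPi
  have h0 : ∑ ε ∈ Δ, (mm ε + n ε + (if ε = α then -c else 0)) • ε = 0 := by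
    rw [sum_add_smul, sum_add_smul, sum_ite_single hα (-c)]
    rw [← hmmeq, ← hneq, hσ]
    module
  have hcoef := delta_indep hs hΔ _ h0
  by_contra hne
  have hex : ∃ ε₀ ∈ Δ, ε₀ ≠ α ∧ 0 < mm ε₀ := by
    by_contra hnex
    push_neg at hnex
    have hzero : ∀ ε ∈ Δ, ε ≠ α → mm ε = 0 := by
      intro ε hε hεα
      exact le_antisymm (hnex ε hε hεα) (hmm ε)
    have hsingle : β = mm α • α := by
      rw [hmmeq]
      rw [Finset.sum_eq_single α]
      · intro b hb hbα
        rw [hzero b hb hbα, zero_smul]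
      · intro h
        exact absurd hα h
    exact hne (eq_of_expr_single hs hΔ hα hβ (mm α) hsingle)
  obtain ⟨ε₀, hε₀Δ, hε₀α, hε₀pos⟩ := hex
  have := hcoef ε₀ hε₀Δ
  rw [if_neg hε₀α] at this
  have : mm ε₀ = - n ε₀ := by linarith
  linarith [hn ε₀]

/-- A simple reflection sends any other positive root to a positive root. -/
lemma refl_mem_Pi (hs : Setting G R v) (hΔ : DeltaProp R v Δ)
    {α β : V} (hα : α ∈ Δ) (hβ : β ∈ Pi R v) (hne : β ≠ α) : sLE α β ∈ Pi R v := by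
  have hσR : sLE α β ∈ R := hs.reflected_mem (delta_sub_R hΔ hα) (Pi_subset hβ)
  rcases lt_or_gt_of_ne (hs.generic _ hσR) with h | h
  · exact absurd (eq_of_refl_neg hs hΔ hα hβ h) hne
  · exact mem_Pi hσR h

end Core

section Words

open Finset

variable {G : Subgroup (V ≃ₗ[ℝ] V)} {R : Finset V} {v : V} {Δ : Finset V}

/-- The set of simple reflections. -/
def SDelta (Δ : Finset V) : Set (V ≃ₗ[ℝ] V) := {t | ∃ δ ∈ Δ, t = sLE δ}

/-- The subgroup generated by the simple reflections. -/
def WD (Δ : Finset V) : Subgroup (V ≃ₗ[ℝ] V) := Subgroup.closure (SDelta Δ)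

lemma WD_le_G (hs : Setting G R v) (hΔ : DeltaProp R v Δ) : WD Δ ≤ G := by
  apply (Subgroup.closure_le G).mpr
  rintro t ⟨δ, hδ, rfl⟩
  exact hs.memG δ (delta_sub_R hΔ hδ)

lemma simple_mem_WD {δ : V} (hδ : δ ∈ Δ) : sLE δ ∈ WD Δ :=
  Subgroup.subset_closure ⟨δ, hδ, rfl⟩

lemma prod_mem_WD {L : List V} (hL : ∀ δ ∈ L, δ ∈ Δ) : (L.map sLE).prod ∈ WD Δ := by
  induction L with
  | nil => simpa using one_mem (WD Δ)
  | cons δ M ih =>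
    rw [List.map_cons, List.prod_cons]
    exact mul_mem (simple_mem_WD (hL δ (List.mem_cons_self)))
      (ih (fun ε hε => hL ε (List.mem_cons_of_mem δ hε)))

lemma mem_WD_list {w : V ≃ₗ[ℝ] V} (hw : w ∈ WD Δ) :
    ∃ L : List V, (∀ δ ∈ L, δ ∈ Δ) ∧ w = (L.map sLE).prod := by
  induction hw using Subgroup.closure_induction with
  | mem t ht =>
    obtain ⟨δ, hδ, rfl⟩ := ht
    exact ⟨[δ], by simpa using hδ, by simp⟩
  | one => exact ⟨[], by simp, by simp⟩
  | mul x y hx hy ihx ihy =>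
    obtain ⟨L1, hL1, rfl⟩ := ihx
    obtain ⟨L2, hL2, rfl⟩ := ihy
    refine ⟨L1 ++ L2, ?_, by simp⟩
    intro δ hδ
    rcases List.mem_append.mp hδ with h | h
    · exact hL1 δ h
    · exact hL2 δ h
  | inv x hx ihx =>
    obtain ⟨L, hL, rfl⟩ := ihx
    refine ⟨L.reverse, fun δ hδ => hL δ (List.mem_reverse.mp hδ), ?_⟩
    have key : ∀ L : List V, ((L.map sLE).prod)⁻¹ = ((L.reverse).map sLE).prod := by
      intro L
      induction L with
      | nil => simp
      | cons a M ihM =>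
        rw [List.map_cons, List.prod_cons, mul_inv_rev, ihM, sLE_inv, List.reverse_cons,
          List.map_append, List.prod_append]
        simp
    exact key L

lemma exchange (hs : Setting G R v) (hΔ : DeltaProp R v Δ) :
    ∀ L : List V, (∀ δ ∈ L, δ ∈ Δ) → ∀ α ∈ Δ, ⟪v, (L.map sLE).prod α⟫ < 0 →
    ∃ L' : List V, (∀ δ ∈ L', δ ∈ Δ) ∧ L'.length + 1 = L.length ∧
      (L'.map sLE).prod = (L.map sLE).prod * sLE α := by
  intro L
  induction L with
  | nil =>
    intro _ α hα hneg
    exfalso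
    simp only [List.map_nil, List.prod_nil] at hneg
    have : (1 : V ≃ₗ[ℝ] V) α = α := rfl
    rw [this] at hneg
    linarith [delta_pos hΔ hα]
  | cons δ M ih =>
    intro hmem α hα hneg
    have hδ : δ ∈ Δ := hmem δ (List.mem_cons_self)
    have hM : ∀ ε ∈ M, ε ∈ Δ := fun ε hε => hmem ε (List.mem_cons_of_mem δ hε)
    set u := (M.map sLE).prod with hu
    have hprod : ((δ :: M).map sLE).prod = sLE δ * u := by
      rw [List.map_cons, List.prod_cons]
    have huG : u ∈ G := WD_le_G hs hΔ (prod_mem_WD hM)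
    have huα : u α ∈ R := hs.closed α (delta_sub_R hΔ hα) u huG
    rcases lt_or_gt_of_ne (hs.generic _ huα) with hneg' | hpos'
    · obtain ⟨M', hM', hlen, hpeq⟩ := ih hM α hα hneg'
      refine ⟨δ :: M', ?_, by simp [← hlen], ?_⟩
      · intro ε hε
        rcases List.mem_cons.mp hε with h | h
        · exact h ▸ hδ
        · exact hM' ε h
      · rw [List.map_cons, List.prod_cons, hpeq, hprod, mul_assoc]
    · have huαPi : u α ∈ Pi R v := mem_Pi huα hpos'
      have hneg2 : ⟪v, sLE δ (u α)⟫ < 0 := by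
        have : ((δ :: M).map sLE).prod α = sLE δ (u α) := by
          rw [hprod]; rfl
        rwa [this] at hneg
      have heq : u α = δ := eq_of_refl_neg hs hΔ hδ huαPi hneg2
      have hconj : sLE (u α) = u * sLE α * u⁻¹ := conj_sLE hs.orth huG α
      refine ⟨M, hM, by simp, ?_⟩
      rw [hprod, ← heq, hconj]
      have : u * sLE α * u⁻¹ * u * sLE α = u * (sLE α * sLE α) := by group
      rw [this, sLE_mul_self, mul_one]

lemma exists_neg_simple (hs : Setting G R v) (hΔ : DeltaProp R v Δ)
    {w : V ≃ₗ[ℝ] V} (hwW : w ∈ WD Δ) (hne : w ≠ 1) :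
    ∃ δ ∈ Δ, ⟪v, w δ⟫ < 0 := by
  classical
  obtain ⟨L, hL, hw⟩ := mem_WD_list hwW
  have hex : ∃ n : ℕ, ∃ L : List V, (∀ δ ∈ L, δ ∈ Δ) ∧ (L.map sLE).prod = w ∧
      L.length = n := ⟨L.length, L, hL, hw.symm, rfl⟩
  set n₀ := Nat.find hex with hn₀
  obtain ⟨L₀, hL₀, hw₀, hlen₀⟩ := Nat.find_spec hex
  have hL₀ne : L₀ ≠ [] := by
    intro h
    rw [h] at hw₀
    simp at hw₀
    exact hne hw₀.symm
  obtain ⟨M, δ, hMδ⟩ := (List.eq_nil_or_concat L₀).resolve_left hL₀ne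
  have hδΔ : δ ∈ Δ := hL₀ δ (by rw [hMδ]; simp)
  by_contra hcon
  push_neg at hcon
  have hδR : δ ∈ R := delta_sub_R hΔ hδΔ
  have hwδR : w δ ∈ R := hs.closed δ hδR w (WD_le_G hs hΔ hwW)
  have hwδpos : 0 < ⟪v, w δ⟫ :=
    lt_of_le_of_ne (hcon δ hδΔ) (Ne.symm (hs.generic _ hwδR))
  set u := (M.map sLE).prod with hu
  have hwu : w = u * sLE δ := by
    rw [← hw₀, hMδ, List.concat_eq_append, List.map_append, List.prod_append]
    simp
    rfl
  have huδneg : ⟪v, u δ⟫ < 0 := by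
    have h1 : u = w * sLE δ := by
      rw [hwu, mul_assoc, sLE_mul_self, mul_one]
    have h2 : u δ = w (sLE δ δ) := by rw [h1]; rfl
    have h3 : sLE δ δ = -δ := by
      rw [sLE_apply, sR_apply_self (hs.unit δ hδR)]
    rw [h2, h3, map_neg, inner_neg_right]
    linarith
  have hMΔ : ∀ ε ∈ M, ε ∈ Δ := fun ε hε => hL₀ ε (by rw [hMδ]; simp [hε])
  obtain ⟨M', hM', hlen, hpeq⟩ := exchange hs hΔ M hMΔ δ hδΔ huδneg
  have hpw : (M'.map sLE).prod = w := by
    rw [hpeq, ← hwu]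
  have hlt : M'.length < n₀ := by
    have : L₀.length = M.length + 1 := by rw [hMδ]; simp
    omega
  exact Nat.find_min hex hlt ⟨M', hM', hpw, rfl⟩

lemma pos_refl_mem_WD (hs : Setting G R v) (hΔ : DeltaProp R v Δ) :
    ∀ β ∈ Pi R v, sLE β ∈ WD Δ := by
  classical
  have main : ∀ n : ℕ, ∀ β ∈ Pi R v,
      ((Pi R v).filter (fun γ => ⟪v, γ⟫ < ⟪v, β⟫)).card = n → sLE β ∈ WD Δ := by
    intro n
    induction n using Nat.strong_induction_on with
    | _ n ih =>
      intro β hβ hcard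
      by_cases hβΔ : β ∈ Δ
      · exact simple_mem_WD hβΔ
      obtain ⟨m, hm, hmeq⟩ := hΔ.cone β hβ
      have hβR : β ∈ R := Pi_subset hβ
      have h1 : (1:ℝ) = ∑ ε ∈ Δ, m ε * ⟪ε, β⟫ := by
        have : ⟪β, β⟫ = (1:ℝ) := hs.unit β hβR
        rw [← this]
        nth_rewrite 1 [hmeq]
        rw [sum_inner]
        exact Finset.sum_congr rfl (fun ε _ => real_inner_smul_left _ _ _)
      have hex : ∃ ε ∈ Δ, 0 < m ε * ⟪ε, β⟫ := by
        by_contra hnex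
        push_neg at hnex
        have : ∑ ε ∈ Δ, m ε * ⟪ε, β⟫ ≤ 0 := Finset.sum_nonpos hnex
        linarith
      obtain ⟨ε, hεΔ, hprod⟩ := hex
      have hmε : 0 < m ε := by
        rcases (hm ε).lt_or_eq with h | h
        · exact h
        · exfalso; rw [← h] at hprod; simp at hprod
      have hip : 0 < ⟪ε, β⟫ := by
        by_contra h
        push_neg at h
        nlinarith
      have hβε : β ≠ ε := fun h => hβΔ (h ▸ hεΔ)
      have hγPi : sLE ε β ∈ Pi R v := refl_mem_Pi hs hΔ hεΔ hβ hβε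
      set γ := sLE ε β with hγ
      have hεR : ε ∈ R := delta_sub_R hΔ hεΔ
      have hflt : ⟪v, γ⟫ < ⟪v, β⟫ := by
        have hform : γ = β - (2 * ⟪β, ε⟫) • ε := by
          rw [hγ, sLE_apply, sR_unit (hs.unit ε hεR)]
        rw [hform, inner_sub_right, real_inner_smul_right]
        have hvε : 0 < ⟪v, ε⟫ := delta_pos hΔ hεΔ
        have : ⟪β, ε⟫ = ⟪ε, β⟫ := real_inner_comm ε β
        nlinarith
      have hsub : (Pi R v).filter (fun x => ⟪v, x⟫ < ⟪v, γ⟫) ⊂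
          (Pi R v).filter (fun x => ⟪v, x⟫ < ⟪v, β⟫) := by
        refine Finset.ssubset_iff_of_subset ?_ |>.mpr ?_
        · intro x hx
          rw [Finset.mem_filter] at hx ⊢
          exact ⟨hx.1, lt_trans hx.2 hflt⟩
        · exact ⟨γ, Finset.mem_filter.mpr ⟨hγPi, hflt⟩, by
            rw [Finset.mem_filter]
            push_neg
            intro _
            exact le_refl _⟩
      have hcard2 : ((Pi R v).filter (fun x => ⟪v, x⟫ < ⟪v, γ⟫)).card < n := by
        rw [← hcard]
        exact Finset.card_lt_card hsub
      have hγW : sLE γ ∈ WD Δ := ih _ hcard2 γ hγPi rfl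
      have hβγ : β = sLE ε γ := by
        rw [hγ]
        show β = sLE ε (sLE ε β)
        rw [sLE_apply, sLE_apply, sR_sR]
      have hconj : sLE β = sLE ε * sLE γ * (sLE ε)⁻¹ := by
        rw [hβγ]
        exact conj_sLE hs.orth (hs.memG ε hεR) γ
      rw [hconj]
      exact mul_mem (mul_mem (simple_mem_WD hεΔ) hγW) (inv_mem (simple_mem_WD hεΔ))
  intro β hβ
  exact main _ β hβ rfl

lemma G_le_WD (hs : Setting G R v) (hΔ : DeltaProp R v Δ)
    (hgen : Subgroup.closure {t : V ≃ₗ[ℝ] V | t ∈ G ∧ IsReflAuto t} = G) :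
    G ≤ WD Δ := by
  rw [← hgen]
  apply (Subgroup.closure_le (WD Δ)).mpr
  rintro t ⟨htG, a, ha0, hta⟩
  have hta' : t = sLE a := by
    apply LinearEquiv.toLinearMap_injective
    apply LinearMap.ext
    intro x
    simpa using hta x
  have hnorm : ‖a‖ ≠ 0 := norm_ne_zero_iff.mpr ha0
  set b := ‖a‖⁻¹ • a with hb
  have hbu : ⟪b, b⟫ = (1:ℝ) := by
    rw [hb, real_inner_smul_left, real_inner_smul_right, real_inner_self_eq_norm_sq]
    field_simp
  have hsb : sLE b = sLE a := sLE_smul_root (inv_ne_zero hnorm)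
  have hbR : b ∈ R := hs.full b hbu (by rw [hsb, ← hta']; exact htG)
  rcases hs.trichotomy hbR with h | h
  · rw [hta', ← hsb]
    exact pos_refl_mem_WD hs hΔ b h
  · rw [hta', ← hsb, ← sLE_neg_root]
    exact pos_refl_mem_WD hs hΔ (-b) h

end Words

section Avoid

lemma avoid (T : Finset V) (U : Submodule ℝ V) (h : ∀ t ∈ T, ∃ u ∈ U, ⟪t, u⟫ ≠ 0) :
    ∃ p ∈ U, ∀ t ∈ T, ⟪t, p⟫ ≠ 0 := by
  classical
  induction T using Finset.induction_on with
  | empty => exact ⟨0, U.zero_mem, by simp⟩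
  | @insert t T hts ih =>
    obtain ⟨p, hpU, hp⟩ := ih (fun s hs => h s (Finset.mem_insert_of_mem hs))
    obtain ⟨u, huU, hu⟩ := h t (Finset.mem_insert_self t T)
    set bad : Set ℝ := ⋃ s ∈ (insert t T : Finset V), {ε : ℝ | ⟪s, p⟫ + ε * ⟪s, u⟫ = 0}
      with hbad
    have hbadfin : bad.Finite := by
      refine Set.Finite.biUnion (insert t T).finite_toSet ?_
      intro s hs
      rcases eq_or_ne (⟪s, u⟫ : ℝ) 0 with h0 | h0
      · have hsp : ⟪s, p⟫ ≠ 0 := by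
          rcases Finset.mem_insert.mp hs with rfl | hsT
          · exact absurd h0 hu
          · exact hp s hsT
        convert Set.finite_empty
        ext ε
        simp [h0, hsp]
      · apply Set.Finite.subset (Set.finite_singleton (-⟪s, p⟫ / ⟪s, u⟫))
        intro ε hε
        simp only [Set.mem_setOf_eq] at hε
        simp only [Set.mem_singleton_iff]
        field_simp
        linarith
    obtain ⟨ε, hε⟩ := hbadfin.infinite_compl.nonempty
    refine ⟨p + ε • u, U.add_mem hpU (U.smul_mem ε huU), ?_⟩
    intro s hs heq
    apply hε
    rw [inner_add_right, real_inner_smul_right] at heq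
    exact Set.mem_biUnion hs heq

end Avoid

section Range

variable [FiniteDimensional ℝ V]

lemma range_eq_orth {w : V ≃ₗ[ℝ] V}
    (hworth : ∀ x y : V, ⟪w x, w y⟫ = ⟪x, y⟫) :
    LinearMap.range (LinearMap.id - (w : V →ₗ[ℝ] V)) =
      (LinearMap.ker (LinearMap.id - (w : V →ₗ[ℝ] V)))ᗮ := by
  set T : V →ₗ[ℝ] V := LinearMap.id - (w : V →ₗ[ℝ] V) with hT
  have happ : ∀ x : V, T x = x - w x := by
    intro x
    simp [hT, LinearMap.sub_apply]
  have hle : LinearMap.range T ≤ (LinearMap.ker T)ᗮ := by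
    rintro y ⟨x, rfl⟩
    rw [Submodule.mem_orthogonal]
    intro u hu
    have huk : T u = 0 := hu
    rw [happ u, sub_eq_zero] at huk
    have huw : w u = u := huk.symm
    rw [happ x, inner_sub_right]
    have h2 : ⟪u, w x⟫ = ⟪u, x⟫ := by
      conv_lhs => rw [← huw]
      exact hworth u x
    rw [h2]
    ring
  refine Submodule.eq_of_le_of_finrank_eq hle ?_
  have e1 := LinearMap.finrank_range_add_finrank_ker T
  have e2 := Submodule.finrank_add_finrank_orthogonal (K := LinearMap.ker T) (𝕜 := ℝ)
  omega

end Range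

section Calc

lemma calc2 {w : V ≃ₗ[ℝ] V} (hworth : ∀ x y : V, ⟪w x, w y⟫ = ⟪x, y⟫) (x : V)
    (hx : x - w x ≠ 0) :
    2 * ⟪x - w x, x⟫ = ⟪x - w x, x - w x⟫ ∧ sR (x - w x) x = w x := by
  have h1 : ⟪w x, w x⟫ = ⟪x, x⟫ := hworth x x
  have h2 : ⟪x - w x, x - w x⟫ = 2 * ⟪x - w x, x⟫ := by
    rw [inner_sub_left, inner_sub_right, inner_sub_right, inner_sub_left, h1,
      real_inner_comm (w x) x]
    ring
  refine ⟨h2.symm, ?_⟩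
  have ht : ⟪x - w x, x - w x⟫ ≠ (0:ℝ) := by
    intro h
    exact hx (inner_self_eq_zero.mp h)
  rw [sR]
  have hc : 2 * ⟪x, x - w x⟫ / ⟪x - w x, x - w x⟫ = 1 := by
    rw [real_inner_comm (x - w x) x, ← h2]
    exact div_self ht
  rw [hc, one_smul]
  abel

lemma calc5 {w : V ≃ₗ[ℝ] V} (hworth : ∀ x y : V, ⟪w x, w y⟫ = ⟪x, y⟫) (x : V)
    (hx : x - w x ≠ 0) : sR (x - w x) (w x) = x := by
  have h2 : ⟪x - w x, x - w x⟫ = 2 * ⟪x - w x, x⟫ := by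
    rw [inner_sub_left, inner_sub_right, inner_sub_right, inner_sub_left, hworth x x,
      real_inner_comm (w x) x]
    ring
  have ht : ⟪x - w x, x - w x⟫ ≠ (0:ℝ) := by
    intro h
    exact hx (inner_self_eq_zero.mp h)
  have h3 : ⟪w x, x - w x⟫ = - (⟪x - w x, x - w x⟫ / 2) := by
    rw [real_inner_comm (x - w x) (w x), h2, inner_sub_left, inner_sub_left,
      hworth x x, real_inner_comm (w x) x]
    ring
  rw [sR, h3]
  have hc : 2 * -(⟪x - w x, x - w x⟫ / 2) / ⟪x - w x, x - w x⟫ = -1 := by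
    field_simp
  rw [hc]
  module

end Calc

end St15

open St15 in
/-- For `w ≠ id` in a finite reflection group there is a root `a ∈ Im(id − w)` such that
`s_a w` fixes pointwise a subspace strictly larger than `Fix(w)`; specifically, if
`a = x − w(x)` is a root then `2(a,x) = (a,a)`, hence `s_a(x) = w(x)`. -/
theorem statement15 (V : Type) [NormedAddCommGroup V] [InnerProductSpace ℝ V]
    [FiniteDimensional ℝ V]
    (G : Subgroup (V ≃ₗ[ℝ] V)) (hfin : Finite G)
    (hgen : Subgroup.closure {t : V ≃ₗ[ℝ] V | t ∈ G ∧ IsReflAuto t} = G)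
    (horth : ∀ g ∈ G, ∀ x y : V, ⟪g x, g y⟫ = ⟪x, y⟫)
    (w : V ≃ₗ[ℝ] V) (hw : w ∈ G) (hne : w ≠ 1) :
    (∃ a : V, a ≠ 0 ∧ (∃ x : V, a = x - w x) ∧
      (∃ g ∈ G, ∀ x, g x = sR a x) ∧
      (∀ x : V, w x = x → sR a (w x) = x) ∧
      (∃ x : V, sR a (w x) = x ∧ w x ≠ x)) ∧
    (∀ x : V, x - w x ≠ 0 →
      2 * ⟪x - w x, x⟫ = ⟪x - w x, x - w x⟫ ∧ sR (x - w x) x = w x) := by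
  classical
  have hworth : ∀ x y : V, ⟪w x, w y⟫ = ⟪x, y⟫ := horth w hw
  refine ⟨?_, fun x hx => calc2 hworth x hx⟩
  -- set up the root system
  have hRfin : (RootSet G).Finite := rootset_finite hfin
  set R : Finset V := hRfin.toFinset with hR
  have hRmem : ∀ a : V, a ∈ R ↔ a ∈ RootSet G := fun a => hRfin.mem_toFinset
  obtain ⟨v, -, hv⟩ := avoid R ⊤ (fun t ht => ⟨t, Submodule.mem_top, by
    rw [((hRmem t).mp ht).1]; norm_num⟩)
  have hs : Setting G R v :=
    { orth := horth
      unit := fun a ha => ((hRmem a).mp ha).1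
      memG := fun a ha => ((hRmem a).mp ha).2
      closed := fun a ha g hg => (hRmem _).mpr (rootset_closed horth ((hRmem a).mp ha) hg)
      negmem := fun a ha => (hRmem _).mpr (rootset_neg ((hRmem a).mp ha))
      generic := fun a ha => by rw [real_inner_comm]; exact hv a ha
      full := fun a hu hG => (hRmem a).mpr ⟨hu, hG⟩ }
  obtain ⟨Δ, hΔ⟩ := exists_delta R v
  -- the fixed space
  set T1 : V →ₗ[ℝ] V := LinearMap.id - (w : V →ₗ[ℝ] V) with hT1
  set U : Submodule ℝ V := LinearMap.ker T1 with hU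
  have hT1app : ∀ x : V, T1 x = x - w x := fun x => by simp [hT1, LinearMap.sub_apply]
  have hUmem : ∀ x : V, x ∈ U ↔ w x = x := by
    intro x
    rw [hU, LinearMap.mem_ker, hT1app, sub_eq_zero, eq_comm]
  -- generic point of U
  obtain ⟨p, hpU, hp⟩ := avoid (R.filter fun β => ∃ u ∈ U, ⟪β, u⟫ ≠ 0) U
    (fun t ht => (Finset.mem_filter.mp ht).2)
  have hgeneric : ∀ β ∈ R, ⟪β, p⟫ = 0 → ∀ u ∈ U, ⟪β, u⟫ = 0 := by
    intro β hβ h0 u hu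
    by_contra hcon
    exact hp β (Finset.mem_filter.mpr ⟨hβ, u, hu, hcon⟩) h0
  -- dominant representative of the orbit of p
  set O : Set V := (fun g : V ≃ₗ[ℝ] V => g p) '' (G : Set (V ≃ₗ[ℝ] V)) with hO
  have hOfin : O.Finite := Set.Finite.image _ (Set.finite_coe_iff.mp hfin)
  have hOne : O.Nonempty := ⟨p, ⟨1, G.one_mem, rfl⟩⟩
  obtain ⟨q, hqO, hqmax⟩ := Set.Finite.exists_maximalFor (fun x : V => ⟪v, x⟫) O hOfin hOne
  have hqmax' : ∀ x ∈ O, ⟪v, x⟫ ≤ ⟪v, q⟫ := by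
    intro x hx
    rcases le_or_gt ⟪v, x⟫ ⟪v, q⟫ with h | h
    · exact h
    · have := hqmax hx h.le
      linarith
  obtain ⟨g₀, hg₀G, hg₀p⟩ := hqO
  have hg₀q : g₀ p = q := hg₀p
  have hdom : ∀ δ ∈ Δ, 0 ≤ ⟪δ, q⟫ := by
    intro δ hδ
    by_contra hneg
    push_neg at hneg
    have hδR : δ ∈ R := delta_sub_R hΔ hδ
    have hmem : sLE δ q ∈ O := ⟨sLE δ * g₀, G.mul_mem (hs.memG δ hδR) hg₀G, by
      rw [← hg₀p]; rfl⟩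
    have hval : ⟪v, sLE δ q⟫ = ⟪v, q⟫ - 2 * ⟪q, δ⟫ * ⟪v, δ⟫ := by
      rw [sLE_apply, sR_unit (hs.unit δ hδR), inner_sub_right, real_inner_smul_right]
    have hvδ : 0 < ⟪v, δ⟫ := delta_pos hΔ hδ
    have hqδ : ⟪q, δ⟫ < 0 := by
      rw [real_inner_comm] at hneg
      exact hneg
    have : ⟪v, q⟫ < ⟪v, sLE δ q⟫ := by
      rw [hval]
      nlinarith
    linarith [hqmax' _ hmem]
  -- the conjugate of w fixing q
  set w' : V ≃ₗ[ℝ] V := g₀ * w * g₀⁻¹ with hw'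
  have hw'G : w' ∈ G := G.mul_mem (G.mul_mem hg₀G hw) (G.inv_mem hg₀G)
  have hw'ne : w' ≠ 1 := by
    intro h
    apply hne
    have : w = g₀⁻¹ * w' * g₀ := by rw [hw']; group
    rw [this, h]
    group
  have hwp : w p = p := (hUmem p).mp hpU
  have hw'q : w' q = q := by
    have h1 : w' q = g₀ (w (g₀⁻¹ (g₀ p))) := by rw [← hg₀q]; rfl
    rw [show g₀⁻¹ (g₀ p) = p from g₀.symm_apply_apply p] at h1
    rw [h1, hwp, hg₀q]
  obtain ⟨δ, hδΔ, hδneg⟩ := exists_neg_simple hs hΔ (G_le_WD hs hΔ hgen hw'G) hw'ne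
  have hδR : δ ∈ R := delta_sub_R hΔ hδΔ
  have hδq : ⟪δ, q⟫ = 0 := by
    have h1 : 0 ≤ ⟪δ, q⟫ := hdom δ hδΔ
    have hw'δR : w' δ ∈ R := hs.closed δ hδR w' hw'G
    have hτ : -(w' δ) ∈ Pi R v := mem_Pi (hs.negmem _ hw'δR)
      (by rw [inner_neg_right]; linarith)
    have hcone : (-(w' δ) : V) ∈ Cone Δ := hΔ.cone _ hτ
    have h3 : 0 ≤ ⟪q, -(w' δ)⟫ := by
      refine cone_inner_nonneg q (fun b hb => ?_) hcone
      rw [real_inner_comm]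
      exact hdom b hb
    rw [inner_neg_right] at h3
    have h4 : ⟪δ, q⟫ = ⟪w' δ, q⟫ := by
      calc ⟪δ, q⟫ = ⟪w' δ, w' q⟫ := (horth w' hw'G δ q).symm
      _ = ⟪w' δ, q⟫ := by rw [hw'q]
    have h5 : ⟪q, w' δ⟫ = ⟪w' δ, q⟫ := real_inner_comm _ _
    linarith
  -- pull the root back
  set β : V := g₀⁻¹ δ with hβ
  have hβR : β ∈ R := hs.closed δ hδR g₀⁻¹ (G.inv_mem hg₀G)
  have hβp : ⟪β, p⟫ = 0 := by
    have h1 : ⟪g₀ β, g₀ p⟫ = ⟪β, p⟫ := horth g₀ hg₀G β p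
    have h2 : g₀ β = δ := by rw [hβ]; exact g₀.apply_symm_apply δ
    rw [← h1, h2, hg₀q, hδq]
  have hβU : ∀ u ∈ U, ⟪β, u⟫ = 0 := hgeneric β hβR hβp
  have hβorth : β ∈ Uᗮ := by
    rw [Submodule.mem_orthogonal]
    intro u hu
    rw [real_inner_comm]
    exact hβU u hu
  have hrange : LinearMap.range T1 = Uᗮ := range_eq_orth hworth
  obtain ⟨x₀, hx₀⟩ : ∃ x : V, x - w x = β := by
    have : β ∈ LinearMap.range T1 := by rw [hrange]; exact hβorth
    obtain ⟨x, hx⟩ := this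
    exact ⟨x, by rw [← hT1app]; exact hx⟩
  have hβ0 : β ≠ 0 := by
    intro h
    have := hs.unit β hβR
    rw [h] at this
    simpa using this
  refine ⟨β, hβ0, ⟨x₀, hx₀.symm⟩, ⟨sLE β, hs.memG β hβR, fun x => rfl⟩, ?_, ?_⟩
  · intro x hxfix
    rw [hxfix]
    apply sR_fixed
    rw [real_inner_comm]
    exact hβU x ((hUmem x).mpr hxfix)
  · have hxne : x₀ - w x₀ ≠ 0 := by rw [hx₀]; exact hβ0
    refine ⟨x₀, ?_, ?_⟩
    · rw [← hx₀]
      exact calc5 hworth x₀ hxne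
    · intro h
      apply hxne
      rw [h, sub_self]
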